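/- Let P = conv(u_0, …, u_n) ⊆ ℝ^n be a full-dimensional lattice simplex, fix an index i and an integer k with 2 ≤ k ≤ min_{j≠i} l_{ij}, and let P_{i,k} be the associated k-dilation. Suppose u ∈ P is written uniquely as u = Σ_{j=0}^n λ_j u_j with all λ_j ≥ 0 and Σ_{j=0}^n λ_j = 1. Then u ∉ P_{i,k} if and only if λ_i < Σ_{j≠i} (r_{ij,k}/(l_{ij} − r_{ij,k}))·λ_j. -/

import Mathlib

open Finset Pointwise

noncomputable section

/-- The real point corresponding to a lattice point. -/
def toR {n : ℕ} (v : Fin n → ℤ) : Fin n → ℝ := fun x => (v x : ℝ)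

/-- The lattice simplex (as a subset of `ℝ^n`) with the given lattice vertices. -/
def lsimplex {n m : ℕ} (u : Fin m → Fin n → ℤ) : Set (Fin n → ℝ) :=
  convexHull ℝ (Set.range fun i => toR (u i))

/-- The lattice length `l_{ij}` of the edge `u_i u_j`:
the gcd of the coordinates of `u_j - u_i`. -/
def latLen {n m : ℕ} (u : Fin m → Fin n → ℤ) (i j : Fin m) : ℕ :=
  Finset.univ.gcd fun x => (u j x - u i x).natAbs

/-- `r_{ij,k}`: the least nonnegative residue of `l_{ij}` modulo `k`. -/
def rmod {n m : ℕ} (u : Fin m → Fin n → ℤ) (i j : Fin m) (k : ℕ) : ℕ :=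
  latLen u i j % k

/-- The vertices of the `k`-dilation `P_{i,k}`: the vertex `u_i` together with, for `j ≠ i`,
the points `((l_{ij} - r_{ij,k})/l_{ij})·u_j + (r_{ij,k}/l_{ij})·u_i`. -/
def dilVert {n m : ℕ} (u : Fin m → Fin n → ℤ) (i : Fin m) (k : ℕ) (j : Fin m) :
    Fin n → ℝ :=
  if j = i then toR (u i)
  else
    ((((latLen u i j : ℝ) - (rmod u i j k : ℝ)) / (latLen u i j : ℝ)) • toR (u j))
      + (((rmod u i j k : ℝ) / (latLen u i j : ℝ)) • toR (u i))

/-- The `k`-dilation `P_{i,k}`. -/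
def dil {n m : ℕ} (u : Fin m → Fin n → ℤ) (i : Fin m) (k : ℕ) : Set (Fin n → ℝ) :=
  convexHull ℝ (Set.range (dilVert u i k))

/-- The primitive edge vector `ũ_{ij} = (u_j - u_i)/l_{ij}`. -/
def primVec {n m : ℕ} (u : Fin m → Fin n → ℤ) (i j : Fin m) : Fin n → ℝ :=
  (latLen u i j : ℝ)⁻¹ • (toR (u j) - toR (u i))

/-- The translated `k`-dilation `P_{i,k,t} = P_{i,k} + Σ_{j ≠ i} t_j ũ_{ij}`. -/
def dilT {n m : ℕ} (u : Fin m → Fin n → ℤ) (i : Fin m) (k : ℕ) (t : Fin m → ℕ) :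
    Set (Fin n → ℝ) :=
  (fun y => y + ∑ j ∈ Finset.univ.erase i, (t j : ℝ) • primVec u i j) '' dil u i k

theorem mem_dil_iff'
    (n : ℕ) (u : Fin (n + 1) → Fin n → ℤ)
    (hind : AffineIndependent ℝ fun i => toR (u i))
    (i : Fin (n + 1)) (k : ℕ) (hk : 2 ≤ k)
    (hkl : ∀ j, j ≠ i → k ≤ latLen u i j)
    (lam : Fin (n + 1) → ℝ) (hnn : ∀ j, 0 ≤ lam j) (hsum : ∑ j, lam j = 1) :
    (∑ j, lam j • toR (u j)) ∈ dil u i k ↔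
      (∑ j ∈ Finset.univ.erase i,
        ((rmod u i j k : ℝ) / ((latLen u i j : ℝ) - (rmod u i j k : ℝ))) * lam j) ≤ lam i := by
  classical
  -- basic positivity facts
  have hL : ∀ j, j ≠ i → (0:ℝ) < (latLen u i j : ℝ) := by
    intro j hj
    have := hkl j hj
    exact_mod_cast (by omega : (0:ℕ) < latLen u i j)
  have hLR : ∀ j, j ≠ i → (0:ℝ) < (latLen u i j : ℝ) - (rmod u i j k : ℝ) := by
    intro j hj
    have h1 : rmod u i j k < k := Nat.mod_lt _ (by omega)
    have h2 : rmod u i j k < latLen u i j := lt_of_lt_of_le h1 (hkl j hj)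
    have : (rmod u i j k : ℝ) < (latLen u i j : ℝ) := by exact_mod_cast h2
    linarith
  -- abbreviation for the "A" coefficient
  set A : Fin (n+1) → ℝ :=
    fun j => ((latLen u i j : ℝ) - (rmod u i j k : ℝ)) / (latLen u i j : ℝ) with hA
  have hApos : ∀ j, j ≠ i → 0 < A j := fun j hj => div_pos (hLR j hj) (hL j hj)
  set B : Fin (n+1) → ℝ := fun j => (rmod u i j k : ℝ) / (latLen u i j : ℝ) with hB
  have hAB : ∀ j, j ≠ i → A j + B j = 1 := by
    intro j hj
    have h0 := (hL j hj).ne'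
    simp only [hA, hB]
    rw [← add_div, sub_add_cancel, div_self h0]
  have hdv : ∀ j, j ≠ i → dilVert u i k j = A j • toR (u j) + B j • toR (u i) := by
    intro j hj
    simp [dilVert, hj]
    rfl
  -- the transported weights
  set W : (Fin (n+1) → ℝ) → (Fin (n+1) → ℝ) :=
    fun w j => if j = i then w i + ∑ j' ∈ Finset.univ.erase i, w j' * B j' else w j * A j
    with hW
  have hWi : ∀ w' : Fin (n+1) → ℝ,
      W w' i = w' i + ∑ j' ∈ Finset.univ.erase i, w' j' * B j' := by
    intro w'; simp [hW]
  have hWj : ∀ (w' : Fin (n+1) → ℝ) (j), j ≠ i → W w' j = w' j * A j := by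
    intro w' j hj; simp [hW, hj]
  have hWsum : ∀ w : Fin (n+1) → ℝ, ∑ j, W w j = ∑ j, w j := by
    intro w
    rw [← Finset.add_sum_erase _ (W w) (mem_univ i), ← Finset.add_sum_erase _ w (mem_univ i)]
    have h1 : ∀ j ∈ Finset.univ.erase i, W w j = w j - w j * B j := by
      intro j hj
      have hj' : j ≠ i := (Finset.mem_erase.mp hj).1
      have hA1 : A j = 1 - B j := eq_sub_of_add_eq (hAB j hj')
      rw [hWj w j hj', hA1]
      ring
    rw [Finset.sum_congr rfl h1, Finset.sum_sub_distrib, hWi]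
    ring
  have hWcomb : ∀ w : Fin (n+1) → ℝ,
      ∑ j, w j • dilVert u i k j = ∑ j, W w j • toR (u j) := by
    intro w
    rw [← Finset.add_sum_erase _ (fun j => w j • dilVert u i k j) (mem_univ i),
        ← Finset.add_sum_erase _ (fun j => W w j • toR (u j)) (mem_univ i)]
    have h1 : ∀ j ∈ Finset.univ.erase i,
        w j • dilVert u i k j = (w j * A j) • toR (u j) + (w j * B j) • toR (u i) := by
      intro j hj
      have hj' : j ≠ i := (Finset.mem_erase.mp hj).1
      rw [hdv j hj', smul_add, smul_smul, smul_smul]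
    rw [Finset.sum_congr rfl h1, Finset.sum_add_distrib, ← Finset.sum_smul]
    have h2 : ∀ j ∈ Finset.univ.erase i,
        W w j • toR (u j) = (w j * A j) • toR (u j) := by
      intro j hj
      rw [hWj w j (Finset.mem_erase.mp hj).1]
    rw [Finset.sum_congr rfl h2, hWi, dilVert, if_pos rfl, add_smul]
    abel
  constructor
  · -- membership implies inequality
    intro hx
    rw [dil, convexHull_range_eq_exists_affineCombination] at hx
    obtain ⟨s, w, hw0, hw1, hweq⟩ := hx
    set w' : Fin (n+1) → ℝ := Set.indicator (↑s) w with hw'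
    have hw'0 : ∀ j, 0 ≤ w' j := by
      intro j
      rw [hw']
      by_cases hj : j ∈ s
      · rw [Set.indicator_of_mem (by exact_mod_cast hj)]; exact hw0 j hj
      · rw [Set.indicator_of_notMem (by exact_mod_cast hj)]
    have hw'1 : ∑ j, w' j = 1 := by
      rw [hw', Finset.sum_indicator_subset _ (Finset.subset_univ s), hw1]
    have hcomb : Finset.univ.affineCombination ℝ (dilVert u i k) w' =
        ∑ j, lam j • toR (u j) := by
      rw [← Finset.affineCombination_indicator_subset w (dilVert u i k) (Finset.subset_univ s)]
      exact hweq
    have hlin : ∑ j, w' j • dilVert u i k j = ∑ j, lam j • toR (u j) := by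
      rw [← Finset.univ.affineCombination_eq_linear_combination _ _ hw'1]
      exact hcomb
    have hWw : W w' = lam := by
      have hWs : ∑ j, W w' j = 1 := by rw [hWsum]; exact hw'1
      have := (affineIndependent_iff_eq_of_fintype_affineCombination_eq ℝ
        (fun j => toR (u j))).mp hind (W w') lam hWs hsum ?_
      · exact this
      · rw [Finset.univ.affineCombination_eq_linear_combination _ _ hWs,
            Finset.univ.affineCombination_eq_linear_combination _ _ hsum]
        rw [← hWcomb, hlin]
    have hlami : lam i = w' i + ∑ j ∈ Finset.univ.erase i, w' j * B j := by
      rw [← hWw, hWi]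
    have hterm : ∀ j ∈ Finset.univ.erase i,
        ((rmod u i j k : ℝ) / ((latLen u i j : ℝ) - (rmod u i j k : ℝ))) * lam j
          = w' j * B j := by
      intro j hj
      have hj' : j ≠ i := (Finset.mem_erase.mp hj).1
      have hlamj : lam j = w' j * A j := by rw [← hWw, hWj w' j hj']
      rw [hlamj, hB]
      have h0 := (hL j hj').ne'
      have h1 := (hLR j hj').ne'
      simp only [hA]
      field_simp [hA]
    rw [Finset.sum_congr rfl hterm, hlami]
    have := hw'0 i
    linarith
  · -- inequality implies membership
    intro hS
    set S := ∑ j ∈ Finset.univ.erase i,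
      ((rmod u i j k : ℝ) / ((latLen u i j : ℝ) - (rmod u i j k : ℝ))) * lam j with hSdef
    set w : Fin (n+1) → ℝ := fun j => if j = i then lam i - S else lam j / A j with hw
    have hwi : w i = lam i - S := by simp [hw]
    have hwj : ∀ j, j ≠ i → w j = lam j / A j := by intro j hj; simp [hw, hj]
    have hw0 : ∀ j, 0 ≤ w j := by
      intro j
      by_cases hj : j = i
      · rw [hj, hwi]; linarith
      · rw [hwj j hj]
        exact div_nonneg (hnn j) (hApos j hj).le
    have hdivA : ∀ j, j ≠ i → lam j / A j
        = lam j + ((rmod u i j k : ℝ) / ((latLen u i j : ℝ) - (rmod u i j k : ℝ))) * lam j := by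
      intro j hj
      have h0 := (hL j hj).ne'
      have h1 := (hLR j hj).ne'
      rw [hA]
      field_simp
      ring
    have hsumS : ∑ j' ∈ Finset.univ.erase i, w j' * B j' = S := by
      rw [hSdef]
      refine Finset.sum_congr rfl fun j' hj' => ?_
      have hj'' : j' ≠ i := (Finset.mem_erase.mp hj').1
      rw [hwj j' hj'']
      have h0 := (hL j' hj'').ne'
      have h1 := (hLR j' hj'').ne'
      rw [hA, hB]
      field_simp
    have hw1 : ∑ j, w j = 1 := by
      rw [← Finset.add_sum_erase _ w (mem_univ i)]
      have he : ∑ j ∈ Finset.univ.erase i, w j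
          = ∑ j ∈ Finset.univ.erase i, lam j + S := by
        rw [hSdef, ← Finset.sum_add_distrib]
        refine Finset.sum_congr rfl fun j hj => ?_
        have hj' : j ≠ i := (Finset.mem_erase.mp hj).1
        rw [hwj j hj']
        exact hdivA j hj'
      rw [he, hwi]
      have : lam i + ∑ j ∈ Finset.univ.erase i, lam j = 1 := by
        rw [Finset.add_sum_erase _ lam (mem_univ i)]; exact hsum
      linarith
    have hWw : W w = lam := by
      funext j
      by_cases hj : j = i
      · rw [hj, hWi, hsumS, hwi]
        ring
      · rw [hWj w j hj, hwj j hj]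
        exact div_mul_cancel₀ _ (hApos j hj).ne'
    have hx : Finset.univ.affineCombination ℝ (dilVert u i k) w = ∑ j, lam j • toR (u j) := by
      rw [Finset.univ.affineCombination_eq_linear_combination _ _ hw1, hWcomb, hWw]
    rw [dil, ← hx]
    exact affineCombination_mem_convexHull (fun j _ => hw0 j) hw1

/-- for `u = Σ λ_j u_j ∈ P` with barycentric coordinates `λ`, one has
`u ∉ P_{i,k}` iff `λ_i < Σ_{j≠i} (r_{ij,k}/(l_{ij} − r_{ij,k}))·λ_j`. -/
theorem not_mem_dilation_iff
    (n : ℕ) (u : Fin (n + 1) → Fin n → ℤ)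
    (hind : AffineIndependent ℝ fun i => toR (u i))
    (i : Fin (n + 1)) (k : ℕ) (hk : 2 ≤ k)
    (hkl : ∀ j, j ≠ i → k ≤ latLen u i j)
    (lam : Fin (n + 1) → ℝ) (hnn : ∀ j, 0 ≤ lam j) (hsum : ∑ j, lam j = 1) :
    (∑ j, lam j • toR (u j)) ∉ dil u i k ↔
      lam i < ∑ j ∈ Finset.univ.erase i,
        ((rmod u i j k : ℝ) / ((latLen u i j : ℝ) - (rmod u i j k : ℝ))) * lam j := by
  exact (not_congr (mem_dil_iff' n u hind i k hk hkl lam hnn hsum)).trans not_le
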